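/- Let n ≥ 2 and let (H_k)_{k∈ℕ} be a sequence of non-trivial subgroups of the free group F_n. If lim_{k→∞} i(Γ_{H_k}) = (n−1)/n = i(T_n), then lim_{k→∞} growth(Γ_{H_k}) = 2n−1 = growth(T_n). -/

import Mathlib

open Filter Real

noncomputable section

namespace JM

/-- The free group of rank `n`. -/
abbrev F (n : ℕ) := FreeGroup (Fin n)

/-- The Poincaré exponent of a subgroup `G` of the free group, with respect to the
word metric of the standard free generating set. -/
def poincareExponent (n : ℕ) (G : Subgroup (F n)) : ℝ :=
  limsup (fun R : ℕ =>
    Real.log (Nat.card {g : F n // g ∈ G ∧ FreeGroup.norm g ≤ R}) / R) atTop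

/-- `G` is of divergence type if its Poincaré series diverges at the exponent. -/
def DivergenceType (n : ℕ) (G : Subgroup (F n)) : Prop :=
  ¬ Summable (fun g : G => Real.exp (-(poincareExponent n G) * FreeGroup.norm (g : F n)))

/-- The vertex set of the quotient graph `Γ_H = T_n/H`: the right cosets `Hg`. -/
abbrev Cosets (n : ℕ) (H : Subgroup (F n)) := Quotient (QuotientGroup.rightRel H)

/-- Right multiplication on right cosets: `Hg ↦ Hga`. -/
def rmul {n : ℕ} {H : Subgroup (F n)} (x : Cosets n H) (a : F n) : Cosets n H :=
  Quotient.liftOn x (fun g => Quotient.mk (QuotientGroup.rightRel H) (g * a))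
    (fun b c h => Quotient.sound (by
      have h' := QuotientGroup.rightRel_apply.mp h
      show (QuotientGroup.rightRel H) _ _
      rw [QuotientGroup.rightRel_apply]
      simpa [mul_assoc] using h'))

/-- Distance from the base vertex `H` to the vertex `Hg` in the quotient graph,
namely `min_{h ∈ H} |hg|`. -/
def cosetDist {n : ℕ} {H : Subgroup (F n)} (x : Cosets n H) : ℕ :=
  sInf (FreeGroup.norm '' {g : F n | Quotient.mk (QuotientGroup.rightRel H) g = x})

/-- The exponential growth rate of the quotient graph `Γ_H = T_n/H`. -/
def graphGrowth (n : ℕ) (H : Subgroup (F n)) : ℝ :=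
  limsup (fun R : ℕ =>
    (Nat.card {x : Cosets n H // cosetDist x ≤ R} : ℝ) ^ (1 / (R : ℝ))) atTop

/-- the generators `S ∪ S⁻¹`, indexed by `Fin n × Bool`. -/
def sgen {n : ℕ} (p : Fin n × Bool) : F n :=
  if p.2 then FreeGroup.of p.1 else (FreeGroup.of p.1)⁻¹

/-- The number of boundary edges of a finite set `A` of vertices of `Γ_H`. -/
def boundaryCard {n : ℕ} {H : Subgroup (F n)} (A : Finset (Cosets n H)) : ℕ :=
  Nat.card {p : Cosets n H × (Fin n × Bool) // p.1 ∈ A ∧ rmul p.1 (sgen p.2) ∉ A}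

/-- The isoperimetric constant of the `2n`-regular graph `Γ_H`. -/
def isoConst (n : ℕ) (H : Subgroup (F n)) : ℝ :=
  sInf {r : ℝ | ∃ A : Finset (Cosets n H), A.Nonempty ∧
    r = (boundaryCard A : ℝ) / (2 * n * A.card)}

/-- The bottom of the spectrum of the discrete Laplacian on `Γ_H`, as the infimum of
Rayleigh quotients of finitely supported nonzero functions. -/
def lambdaZero (n : ℕ) (H : Subgroup (F n)) : ℝ :=
  sInf {r : ℝ | ∃ f : Cosets n H → ℝ, (Function.support f).Finite ∧ f ≠ 0 ∧
    r = (∑ᶠ x, ∑ i : Fin n, (f x - f (rmul x (FreeGroup.of i))) ^ 2) /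
        (2 * n * ∑ᶠ x, (f x) ^ 2)}

/-- The transition operator of the simple random walk on `Γ_H`. -/
def transOp {n : ℕ} {H : Subgroup (F n)} (f : Cosets n H → ℝ) (x : Cosets n H) : ℝ :=
  (1 / (2 * n)) * ∑ p : Fin n × Bool, f (rmul x (sgen p))

/-- The spectral radius of the transition operator `P` of the simple random walk on
`Γ_N`: since `P` is bounded and self-adjoint on `ℓ²`, its spectral radius equals its
operator norm, i.e. the supremum of `‖Pf‖/‖f‖` over finitely supported nonzero `f`. -/
def specRad (n : ℕ) (H : Subgroup (F n)) : ℝ :=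
  sSup {r : ℝ | ∃ f : Cosets n H → ℝ, (Function.support f).Finite ∧ f ≠ 0 ∧
    r = Real.sqrt (∑ᶠ x, (transOp f x) ^ 2) / Real.sqrt (∑ᶠ x, (f x) ^ 2)}



variable {α : Type*} [DecidableEq α]

lemma reduce_tail {a : α × Bool} {M : List (α × Bool)}
    (h : FreeGroup.reduce (a :: M) = a :: M) : FreeGroup.reduce M = M := by
  rw [FreeGroup.reduce.cons] at h
  cases hK : FreeGroup.reduce M with
  | nil =>
    rw [hK] at h
    simp only at h
    obtain ⟨-, hM⟩ := List.cons.inj h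
    exact hM
  | cons hd tl =>
    rw [hK] at h
    simp only at h
    split_ifs at h with hc
    · have h1 := congrArg List.length h
      have h2 : (FreeGroup.reduce M).length ≤ M.length := FreeGroup.reduce.red.length_le
      rw [hK] at h2
      simp at h1 h2
      omega
    · exact (List.cons.inj h).2

lemma reduced_no_cancel {a b : α × Bool} {t : List (α × Bool)}
    (h : FreeGroup.reduce (a :: b :: t) = a :: b :: t) :
    ¬(a.1 = b.1 ∧ a.2 = !b.2) := by
  intro hc
  have htail : FreeGroup.reduce (b :: t) = b :: t := reduce_tail h
  rw [FreeGroup.reduce.cons, htail] at h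
  simp only [hc, if_pos, and_self, if_true] at h
  have := congrArg List.length h
  simp at this
  omega


section Counting


variable (α) [Fintype α] [Nonempty α]

/-- The finset of reduced words of length `j`. -/
noncomputable def redFinset (j : ℕ) : Finset (List (α × Bool)) :=
  (List.finite_length_eq (α × Bool) j).toFinset.filter fun l => FreeGroup.reduce l = l

lemma mem_redFinset {j : ℕ} {l : List (α × Bool)} :
    l ∈ redFinset α j ↔ l.length = j ∧ FreeGroup.reduce l = l := by
  simp [redFinset, Set.Finite.mem_toFinset]

lemma redFinset_zero_card : (redFinset α 0).card ≤ 1 := by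
  apply Finset.card_le_one.mpr
  intro l hl m hm
  rw [mem_redFinset] at hl hm
  rw [List.length_eq_zero_iff.mp hl.1, List.length_eq_zero_iff.mp hm.1]

lemma redFinset_one_card : (redFinset α 1).card ≤ Fintype.card (α × Bool) := by
  classical
  letI : Inhabited (α × Bool) := ⟨Classical.arbitrary α, true⟩
  calc (redFinset α 1).card ≤ (Finset.univ : Finset (α × Bool)).card := by
        apply Finset.card_le_card_of_injOn (fun l => l.headI) (fun _ _ => Finset.mem_univ _)
        intro l hl m hm h
        rw [Finset.mem_coe, mem_redFinset] at hl hm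
        obtain ⟨a, rfl⟩ := List.length_eq_one_iff.mp hl.1
        obtain ⟨b, rfl⟩ := List.length_eq_one_iff.mp hm.1
        simpa using h
    _ = Fintype.card (α × Bool) := Finset.card_univ

lemma redFinset_step (j : ℕ) :
    (redFinset α (j + 2)).card ≤ (Fintype.card (α × Bool) - 1) * (redFinset α (j + 1)).card := by
  classical
  letI : Inhabited (α × Bool) := ⟨Classical.arbitrary α, true⟩
  set T1 := redFinset α (j + 1) with hT1
  set Bad : Finset (List (α × Bool) × (α × Bool)) :=
    T1.image (fun m => (m, (m.headI.1, !m.headI.2))) with hBad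
  have hBadcard : Bad.card = T1.card :=
    Finset.card_image_of_injective _ (fun m₁ m₂ h => (Prod.mk.injEq _ _ _ _ ▸ h).1)
  have hBadsub : Bad ⊆ T1 ×ˢ (Finset.univ : Finset (α × Bool)) := by
    intro p hp
    rw [hBad, Finset.mem_image] at hp
    obtain ⟨m, hm, rfl⟩ := hp
    exact Finset.mem_product.mpr ⟨hm, Finset.mem_univ _⟩
  have key : (redFinset α (j + 2)).card ≤ ((T1 ×ˢ (Finset.univ : Finset (α × Bool))) \ Bad).card := by
    apply Finset.card_le_card_of_injOn (fun l => (l.tail, l.headI))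
    · intro l hl
      rw [Finset.mem_coe, mem_redFinset] at hl
      obtain ⟨hlen, hred⟩ := hl
      obtain ⟨a, M, rfl⟩ : ∃ a M, l = a :: M := by
        cases l with
        | nil => simp at hlen
        | cons a M => exact ⟨a, M, rfl⟩
      obtain ⟨b, t, rfl⟩ : ∃ b t, M = b :: t := by
        cases M with
        | nil => simp at hlen
        | cons b t => exact ⟨b, t, rfl⟩
      simp only [List.tail_cons, List.headI]
      rw [Finset.mem_coe, Finset.mem_sdiff]
      constructor
      · apply Finset.mem_product.mpr
        refine ⟨?_, Finset.mem_univ _⟩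
        rw [mem_redFinset]
        exact ⟨by simpa using hlen, reduce_tail hred⟩
      · intro hmem
        rw [hBad, Finset.mem_image] at hmem
        obtain ⟨m, hm, hEq⟩ := hmem
        obtain ⟨h1, h2'⟩ := Prod.ext_iff.mp hEq
        simp only at h1 h2'
        have h2 : a = (m.headI.1, !m.headI.2) := h2'.symm
        rw [h1] at h2
        simp only [List.headI] at h2
        exact reduced_no_cancel hred ⟨by rw [h2], by rw [h2]⟩
    · intro l hl m hm h
      rw [Finset.mem_coe, mem_redFinset] at hl hm
      obtain ⟨a, M, rfl⟩ : ∃ a M, l = a :: M := by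
        cases l with
        | nil => simp at hl
        | cons a M => exact ⟨a, M, rfl⟩
      obtain ⟨b, t, rfl⟩ : ∃ b t, m = b :: t := by
        cases m with
        | nil => simp at hm
        | cons b t => exact ⟨b, t, rfl⟩
      simp only [List.tail_cons, List.headI, Prod.mk.injEq] at h
      rw [h.1, h.2]
  calc (redFinset α (j + 2)).card
      ≤ ((T1 ×ˢ (Finset.univ : Finset (α × Bool))) \ Bad).card := key
    _ = (T1 ×ˢ (Finset.univ : Finset (α × Bool))).card - Bad.card := Finset.card_sdiff_of_subset hBadsub
    _ = Fintype.card (α × Bool) * T1.card - T1.card := by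
        rw [Finset.card_product, hBadcard, Finset.card_univ]; ring_nf
    _ = (Fintype.card (α × Bool) - 1) * T1.card := by
        rw [Nat.sub_mul, one_mul]

lemma redFinset_card_bound (j : ℕ) :
    (redFinset α (j + 1)).card ≤ Fintype.card (α × Bool) * (Fintype.card (α × Bool) - 1) ^ j := by
  induction j with
  | zero => simpa using redFinset_one_card α
  | succ j ih =>
    calc (redFinset α (j + 2)).card
        ≤ (Fintype.card (α × Bool) - 1) * (redFinset α (j + 1)).card := redFinset_step α j
      _ ≤ (Fintype.card (α × Bool) - 1) * (Fintype.card (α × Bool) * (Fintype.card (α × Bool) - 1) ^ j) :=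
          Nat.mul_le_mul_left _ ih
      _ = Fintype.card (α × Bool) * (Fintype.card (α × Bool) - 1) ^ (j + 1) := by ring


end Counting

section BallBound

variable {α : Type*} [DecidableEq α] [Fintype α] [Nonempty α]

lemma ball_card_bound (R : ℕ) :
    Nat.card {g : FreeGroup α // FreeGroup.norm g ≤ R} ≤
      (R + 1) * (Fintype.card (α × Bool) * (Fintype.card (α × Bool) - 1) ^ R) := by
  classical
  set m := Fintype.card (α × Bool) with hm
  set U : Finset (List (α × Bool)) :=
    (List.finite_length_le (α × Bool) R).toFinset.filter (fun l => FreeGroup.reduce l = l) with hU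
  have hmemU : ∀ {l}, l ∈ U ↔ l.length ≤ R ∧ FreeGroup.reduce l = l := by
    intro l; simp [hU, Set.Finite.mem_toFinset]
  have step1 : Nat.card {g : FreeGroup α // FreeGroup.norm g ≤ R} ≤ U.card := by
    have : Nat.card {g : FreeGroup α // FreeGroup.norm g ≤ R} ≤ Nat.card {l // l ∈ U} := by
      apply Nat.card_le_card_of_injective
        (fun g => (⟨FreeGroup.toWord g.1, hmemU.mpr ⟨g.2, FreeGroup.reduce_toWord _⟩⟩ : {l // l ∈ U}))
      intro g g' h
      exact Subtype.ext (FreeGroup.toWord_injective (congrArg Subtype.val h))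
    simpa [Nat.card_eq_fintype_card, Fintype.card_coe] using this
  have step2 : U ⊆ (Finset.range (R + 1)).biUnion (fun j => redFinset α j) := by
    intro l hl
    rw [hmemU] at hl
    apply Finset.mem_biUnion.mpr
    exact ⟨l.length, Finset.mem_range.mpr (by omega), (mem_redFinset α).mpr ⟨rfl, hl.2⟩⟩
  have hone : 1 ≤ m - 1 := by
    have : 2 ≤ m := by
      rw [hm, Fintype.card_prod, Fintype.card_bool]
      have := Fintype.card_pos (α := α)
      omega
    omega
  have step3 : ∀ j ∈ Finset.range (R + 1), (redFinset α j).card ≤ m * (m - 1) ^ R := by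
    intro j hj
    rw [Finset.mem_range] at hj
    cases j with
    | zero =>
      calc (redFinset α 0).card ≤ 1 := redFinset_zero_card α
        _ ≤ m * (m - 1) ^ R := Nat.one_le_iff_ne_zero.mpr (by positivity)
    | succ i =>
      calc (redFinset α (i + 1)).card ≤ m * (m - 1) ^ i := redFinset_card_bound α i
        _ ≤ m * (m - 1) ^ R := Nat.mul_le_mul_left _ (Nat.pow_le_pow_right hone (by omega))
  calc Nat.card {g : FreeGroup α // FreeGroup.norm g ≤ R} ≤ U.card := step1
    _ ≤ ((Finset.range (R + 1)).biUnion (fun j => redFinset α j)).card := Finset.card_le_card step2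
    _ ≤ ∑ j ∈ Finset.range (R + 1), (redFinset α j).card := Finset.card_biUnion_le
    _ ≤ (R + 1) * (m * (m - 1) ^ R) := by
        simpa using Finset.sum_le_card_nsmul (Finset.range (R + 1)) _ _ step3


end BallBound

section Analytic

lemma tendsto_nat_rpow_div :
    Tendsto (fun R : ℕ => (R : ℝ) ^ (1 / (R : ℝ))) atTop (nhds 1) :=
  tendsto_rpow_div.comp tendsto_natCast_atTop_atTop

lemma tendsto_poly_rpow (C : ℝ) (hC : 1 ≤ C) :
    Tendsto (fun R : ℕ => ((R + 1 : ℝ) * C) ^ (1 / (R : ℝ))) atTop (nhds 1) := by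
  have h3 : Tendsto (fun R : ℕ => ((R : ℝ) ^ (1 / (R : ℝ))) ^ (3 : ℕ)) atTop (nhds 1) := by
    simpa using tendsto_nat_rpow_div.pow 3
  apply tendsto_of_tendsto_of_tendsto_of_le_of_le' tendsto_const_nhds h3
  · filter_upwards [eventually_ge_atTop 1] with R hR
    apply Real.one_le_rpow
    · have h0 : (0 : ℝ) ≤ (R : ℝ) := Nat.cast_nonneg R
      nlinarith
    · positivity
  · filter_upwards [eventually_ge_atTop (max 2 (Nat.ceil C))] with R hR
    have hR2 : (2 : ℕ) ≤ R := le_trans (le_max_left _ _) hR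
    have hRC : C ≤ (R : ℝ) := by
      calc C ≤ (Nat.ceil C : ℝ) := Nat.le_ceil C
        _ ≤ (R : ℝ) := by exact_mod_cast le_trans (le_max_right _ _) hR
    have hRpos : (0 : ℝ) < R := by positivity
    have hbase : (R + 1 : ℝ) * C ≤ (R : ℝ) ^ (3 : ℕ) := by
      have h1 : (R + 1 : ℝ) ≤ (R : ℝ) ^ 2 := by nlinarith [show (2:ℝ) ≤ (R:ℝ) by exact_mod_cast hR2]
      calc (R + 1 : ℝ) * C ≤ (R : ℝ) ^ 2 * (R : ℝ) :=
            mul_le_mul h1 hRC (le_trans zero_le_one hC) (by positivity)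
        _ = (R : ℝ) ^ (3 : ℕ) := by ring
    calc ((R + 1 : ℝ) * C) ^ (1 / (R : ℝ)) ≤ ((R : ℝ) ^ (3 : ℕ)) ^ (1 / (R : ℝ)) :=
          Real.rpow_le_rpow (by positivity) hbase (by positivity)
      _ = ((R : ℝ) ^ (1 / (R : ℝ))) ^ (3 : ℕ) := by
          rw [← Real.rpow_natCast ((R : ℝ) ^ (1 / (R : ℝ))) 3, ← Real.rpow_natCast (R : ℝ) 3,
            ← Real.rpow_mul hRpos.le, ← Real.rpow_mul hRpos.le, mul_comm]

lemma tendsto_upper (C D : ℝ) (hC : 1 ≤ C) (hD : 1 ≤ D) :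
    Tendsto (fun R : ℕ => ((R + 1 : ℝ) * C * D ^ (R : ℕ)) ^ (1 / (R : ℝ))) atTop (nhds D) := by
  have hD0 : (0 : ℝ) ≤ D := le_trans zero_le_one hD
  have key : ∀ᶠ R : ℕ in atTop, ((R + 1 : ℝ) * C * D ^ (R : ℕ)) ^ (1 / (R : ℝ))
      = ((R + 1 : ℝ) * C) ^ (1 / (R : ℝ)) * D := by
    filter_upwards [eventually_ge_atTop 1] with R hR
    have hRne : (R : ℝ) ≠ 0 := by positivity
    rw [Real.mul_rpow (by positivity) (by positivity), ← Real.rpow_natCast D R,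
      ← Real.rpow_mul hD0, mul_one_div_cancel hRne, Real.rpow_one]
  rw [tendsto_congr' key]
  simpa using (tendsto_poly_rpow C hC).mul (tendsto_const_nhds (x := D))

end Analytic

section CosetLemmas

variable {n : ℕ} {H : Subgroup (F n)}

lemma rmul_mk (g a : F n) :
    rmul (Quotient.mk (QuotientGroup.rightRel H) g) a
      = Quotient.mk (QuotientGroup.rightRel H) (g * a) := rfl

lemma cosetDist_mk_le (g : F n) :
    cosetDist (Quotient.mk (QuotientGroup.rightRel H) g) ≤ FreeGroup.norm g :=
  Nat.sInf_le ⟨g, rfl, rfl⟩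

lemma exists_min_rep (x : Cosets n H) :
    ∃ g : F n, Quotient.mk (QuotientGroup.rightRel H) g = x ∧ FreeGroup.norm g = cosetDist x := by
  obtain ⟨g₀, rfl⟩ := Quotient.exists_rep x
  have hne : (FreeGroup.norm '' {g : F n |
      Quotient.mk (QuotientGroup.rightRel H) g = Quotient.mk (QuotientGroup.rightRel H) g₀}).Nonempty :=
    ⟨FreeGroup.norm g₀, g₀, rfl, rfl⟩
  obtain ⟨g, hg, hnorm⟩ := Nat.sInf_mem hne
  exact ⟨g, hg, hnorm⟩

lemma sgen_eq_mk (p : Fin n × Bool) : sgen p = FreeGroup.mk [p] := by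
  obtain ⟨s, b⟩ := p
  cases b
  · show (FreeGroup.of s)⁻¹ = _
    rw [FreeGroup.of, FreeGroup.inv_mk]
    simp [FreeGroup.invRev]
  · rfl

lemma norm_sgen (p : Fin n × Bool) : FreeGroup.norm (sgen p) = 1 := by
  obtain ⟨s, b⟩ := p
  cases b
  · show FreeGroup.norm (FreeGroup.of s)⁻¹ = 1
    rw [FreeGroup.norm_inv_eq, FreeGroup.norm_of]
  · exact FreeGroup.norm_of s

lemma cosetDist_rmul_le (x : Cosets n H) (p : Fin n × Bool) :
    cosetDist (rmul x (sgen p)) ≤ cosetDist x + 1 := by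
  obtain ⟨g, rfl, hnorm⟩ := exists_min_rep x
  rw [rmul_mk]
  calc cosetDist (Quotient.mk (QuotientGroup.rightRel H) (g * sgen p))
      ≤ FreeGroup.norm (g * sgen p) := cosetDist_mk_le _
    _ ≤ FreeGroup.norm g + FreeGroup.norm (sgen p) := FreeGroup.norm_mul_le _ _
    _ = cosetDist (Quotient.mk (QuotientGroup.rightRel H) g) + 1 := by rw [hnorm, norm_sgen]

lemma exists_retreat {x : Cosets n H} {R : ℕ} (h : cosetDist x = R + 1) :
    ∃ p : Fin n × Bool, cosetDist (rmul x (sgen p)) ≤ R := by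
  obtain ⟨g, rfl, hnorm⟩ := exists_min_rep x
  rw [h] at hnorm
  set w := FreeGroup.toWord g with hw
  have hlen : w.length = R + 1 := hnorm
  have hwne : w ≠ [] := by intro hcon; rw [hcon] at hlen; simp at hlen
  set a := w.getLast hwne with ha
  refine ⟨(a.1, !a.2), ?_⟩
  have hkey : g * sgen (a.1, !a.2) = FreeGroup.mk w.dropLast := by
    have hg : g = FreeGroup.mk w := (FreeGroup.mk_toWord).symm
    rw [hg, sgen_eq_mk, FreeGroup.mul_mk]
    have hsplit : w = w.dropLast ++ [a] := (List.dropLast_append_getLast hwne).symm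
    calc FreeGroup.mk (w ++ [(a.1, !a.2)])
        = FreeGroup.mk (w.dropLast ++ (a.1, a.2) :: (a.1, !a.2) :: []) := by
          rw [show w.dropLast ++ (a.1, a.2) :: (a.1, !a.2) :: [] =
              (w.dropLast ++ [a]) ++ [(a.1, !a.2)] by simp]
          rw [← hsplit]
      _ = FreeGroup.mk (w.dropLast ++ []) := Quot.sound FreeGroup.Red.Step.not
      _ = FreeGroup.mk w.dropLast := by rw [List.append_nil]
  rw [rmul_mk, hkey]
  calc cosetDist (Quotient.mk (QuotientGroup.rightRel H) (FreeGroup.mk w.dropLast))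
      ≤ FreeGroup.norm (FreeGroup.mk w.dropLast) := cosetDist_mk_le _
    _ ≤ w.dropLast.length := FreeGroup.norm_mk_le
    _ = R := by simp [List.length_dropLast, hlen]


lemma freeBall_finite (R : ℕ) : {g : F n | FreeGroup.norm g ≤ R}.Finite := by
  have : {g : F n | FreeGroup.norm g ≤ R} ⊆
      FreeGroup.toWord ⁻¹' {l : List (Fin n × Bool) | l.length ≤ R} := fun g hg => hg
  exact Set.Finite.subset
    (Set.Finite.preimage FreeGroup.toWord_injective.injOn (List.finite_length_le _ R)) this

lemma cosetBall_finite (R : ℕ) : {x : Cosets n H | cosetDist x ≤ R}.Finite := by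
  apply Set.Finite.subset ((freeBall_finite R).image (Quotient.mk (QuotientGroup.rightRel H)))
  intro x hx
  obtain ⟨g, hg, hnorm⟩ := exists_min_rep x
  exact ⟨g, by rw [Set.mem_setOf_eq, hnorm]; exact hx, hg⟩

end CosetLemmas

section MainCounting

variable {n : ℕ} {H : Subgroup (F n)}

/-- shorthand for the ball cardinality in the quotient graph -/
noncomputable def NN (n : ℕ) (H : Subgroup (F n)) (R : ℕ) : ℕ :=
  Nat.card {x : Cosets n H // cosetDist x ≤ R}

lemma NN_card (R : ℕ) : NN n H R = (cosetBall_finite (H := H) R).toFinset.card := by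
  rw [NN]
  have e : {x : Cosets n H // cosetDist x ≤ R} ≃
      {x : Cosets n H // x ∈ (cosetBall_finite (H := H) R).toFinset} :=
    Equiv.subtypeEquivRight (fun x => by simp [Set.Finite.mem_toFinset])
  rw [Nat.card_congr e, Nat.card_eq_fintype_card, Fintype.card_coe]

lemma NN_pos (R : ℕ) : 1 ≤ NN n H R := by
  haveI : Finite {x : Cosets n H // cosetDist x ≤ R} :=
    (cosetBall_finite (H := H) R).to_subtype
  haveI : Nonempty {x : Cosets n H // cosetDist x ≤ R} :=
    ⟨⟨Quotient.mk (QuotientGroup.rightRel H) 1, by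
      have := cosetDist_mk_le (H := H) 1
      simpa using le_trans this (Nat.zero_le R)⟩⟩
  exact Nat.card_pos

lemma NN_mono (R : ℕ) : NN n H R ≤ NN n H (R + 1) := by
  rw [NN_card, NN_card]
  apply Finset.card_le_card
  intro x hx
  rw [Set.Finite.mem_toFinset] at hx ⊢
  exact Nat.le_succ_of_le hx

lemma count_ineq (hn : 2 ≤ n) (R : ℕ) :
    2 * n * NN n H R + (NN n H (R + 1) - NN n H R)
      + boundaryCard (cosetBall_finite (H := H) (R + 1)).toFinset
    ≤ 2 * n * NN n H (R + 1) := by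
  classical
  set A := (cosetBall_finite (H := H) (R + 1)).toFinset with hA
  set A' := (cosetBall_finite (H := H) R).toFinset with hA'
  have memA : ∀ {x : Cosets n H}, x ∈ A ↔ cosetDist x ≤ R + 1 :=
    fun {x} => Set.Finite.mem_toFinset _
  have memA' : ∀ {x : Cosets n H}, x ∈ A' ↔ cosetDist x ≤ R :=
    fun {x} => Set.Finite.mem_toFinset _
  have hsub : A' ⊆ A := fun x hx => memA.mpr (le_trans (memA'.mp hx) (by omega))
  set In := (A ×ˢ (Finset.univ : Finset (Fin n × Bool))).filter
    (fun q => rmul q.1 (sgen q.2) ∈ A) with hIn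
  set Bd := (A ×ˢ (Finset.univ : Finset (Fin n × Bool))).filter
    (fun q => ¬ rmul q.1 (sgen q.2) ∈ A) with hBd
  have hsplit : In.card + Bd.card = A.card * (2 * n) := by
    rw [hIn, hBd, Finset.card_filter_add_card_filter_not, Finset.card_product,
      Finset.card_univ, Fintype.card_prod, Fintype.card_fin, Fintype.card_bool]
    ring
  have hbd : boundaryCard A = Bd.card := by
    rw [boundaryCard, Nat.card_congr (Equiv.subtypeEquivRight (q := fun p => p ∈ Bd)
      (fun q => by simp [hBd, Finset.mem_filter, Finset.mem_product]))]
    rw [Nat.card_eq_fintype_card, Fintype.card_coe]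
  set pick : Cosets n H → Fin n × Bool := fun x =>
    if h : ∃ p : Fin n × Bool, cosetDist (rmul x (sgen p)) ≤ R then h.choose
    else (⟨0, by omega⟩, true) with hpick
  set Extra := (A \ A').image (fun x => (x, pick x)) with hExtra
  have hExtra_sub : Extra ⊆ In := by
    intro q hq
    rw [hExtra, Finset.mem_image] at hq
    obtain ⟨x, hx, rfl⟩ := hq
    rw [Finset.mem_sdiff] at hx
    have hd : cosetDist x = R + 1 := by
      have h1 := memA.mp hx.1
      have h2 : ¬ cosetDist x ≤ R := fun hc => hx.2 (memA'.mpr hc)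
      omega
    have hex : ∃ p : Fin n × Bool, cosetDist (rmul x (sgen p)) ≤ R := exists_retreat hd
    have hpx : cosetDist (rmul x (sgen (pick x))) ≤ R := by
      rw [hpick]; simp only [dif_pos hex]; exact hex.choose_spec
    rw [hIn, Finset.mem_filter]
    exact ⟨Finset.mem_product.mpr ⟨hx.1, Finset.mem_univ _⟩,
      memA.mpr (le_trans hpx (by omega))⟩
  have hProd_sub : A' ×ˢ (Finset.univ : Finset (Fin n × Bool)) ⊆ In := by
    intro q hq
    rw [Finset.mem_product] at hq
    rw [hIn, Finset.mem_filter]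
    refine ⟨Finset.mem_product.mpr ⟨hsub hq.1, Finset.mem_univ _⟩, ?_⟩
    apply memA.mpr
    calc cosetDist (rmul q.1 (sgen q.2)) ≤ cosetDist q.1 + 1 := cosetDist_rmul_le _ _
      _ ≤ R + 1 := by have := memA'.mp hq.1; omega
  have hdisj : Disjoint (A' ×ˢ (Finset.univ : Finset (Fin n × Bool))) Extra := by
    rw [Finset.disjoint_left]
    intro q hq hq'
    rw [Finset.mem_product] at hq
    rw [hExtra, Finset.mem_image] at hq'
    obtain ⟨x, hx, rfl⟩ := hq'
    rw [Finset.mem_sdiff] at hx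
    exact hx.2 hq.1
  have hExtra_card : Extra.card = A.card - A'.card := by
    rw [hExtra, Finset.card_image_of_injective _ (fun a b hab => (Prod.ext_iff.mp hab).1),
      Finset.card_sdiff_of_subset hsub]
  have hcards : A'.card * (2 * n) + (A.card - A'.card) ≤ In.card := by
    calc A'.card * (2 * n) + (A.card - A'.card)
        = (A' ×ˢ (Finset.univ : Finset (Fin n × Bool))).card + Extra.card := by
          rw [hExtra_card, Finset.card_product, Finset.card_univ, Fintype.card_prod,
            Fintype.card_fin, Fintype.card_bool]
          ring_nf
      _ = ((A' ×ˢ (Finset.univ : Finset (Fin n × Bool))) ∪ Extra).card :=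
          (Finset.card_union_of_disjoint hdisj).symm
      _ ≤ In.card := Finset.card_le_card (Finset.union_subset hProd_sub hExtra_sub)
  have hNN : NN n H (R + 1) = A.card := NN_card _
  have hNN' : NN n H R = A'.card := NN_card _
  rw [hNN, hNN', hbd]
  calc 2 * n * A'.card + (A.card - A'.card) + Bd.card
      = A'.card * (2 * n) + (A.card - A'.card) + Bd.card := by ring_nf
    _ ≤ In.card + Bd.card := Nat.add_le_add_right hcards _
    _ = A.card * (2 * n) := hsplit
    _ = 2 * n * A.card := by ring

end MainCounting

section RealStep

variable {n : ℕ} {H : Subgroup (F n)}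

lemma isoConst_le_ratio (A : Finset (Cosets n H)) (hA : A.Nonempty) :
    isoConst n H ≤ (boundaryCard A : ℝ) / (2 * n * A.card) := by
  apply csInf_le
  · refine ⟨0, fun r hr => ?_⟩
    obtain ⟨B, hB, rfl⟩ := hr
    positivity
  · exact ⟨A, hA, rfl⟩

lemma real_step (hn : 2 ≤ n) (R : ℕ) :
    (2 * n - 1 : ℝ) * NN n H R ≤ ((1 - isoConst n H) * (2 * n) - 1) * NN n H (R + 1) := by
  set A := (cosetBall_finite (H := H) (R + 1)).toFinset with hA
  have hcard : A.card = NN n H (R + 1) := (NN_card _).symm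
  have hAne : A.Nonempty := by
    rw [← Finset.card_pos, hcard]
    exact NN_pos _
  have hiso := isoConst_le_ratio A hAne
  have hNpos : (0 : ℝ) < 2 * n * A.card := by
    have h1 : 0 < A.card := Finset.card_pos.mpr hAne
    have h2 : 0 < n := by omega
    positivity
  have hbd : isoConst n H * (2 * n * A.card) ≤ (boundaryCard A : ℝ) :=
    (le_div_iff₀ hNpos).mp hiso
  have hcount := count_ineq (H := H) hn R
  have hmono := NN_mono (H := H) R
  have hcast : (2 * n * NN n H R : ℝ) + ((NN n H (R + 1) : ℝ) - NN n H R)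
      + (boundaryCard A : ℝ) ≤ 2 * n * NN n H (R + 1) := by
    have := (Nat.cast_le (α := ℝ)).mpr hcount
    push_cast [Nat.cast_sub hmono] at this
    convert this using 2 <;> push_cast <;> ring
  rw [hcard] at hbd
  nlinarith [hbd, hcast]

lemma NN_lower (hn : 2 ≤ n) (R : ℕ) :
    ((2 * n - 1 : ℝ) / max ((1 - isoConst n H) * (2 * n) - 1) 1) ^ R ≤ NN n H R := by
  set γ : ℝ := max ((1 - isoConst n H) * (2 * n) - 1) 1 with hγ
  have hγ1 : (1 : ℝ) ≤ γ := le_max_right _ _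
  have hγ0 : (0 : ℝ) < γ := lt_of_lt_of_le one_pos hγ1
  have hq0 : (0 : ℝ) ≤ (2 * n - 1 : ℝ) / γ := by
    apply div_nonneg _ hγ0.le
    have : (2 : ℝ) ≤ (n : ℝ) := by exact_mod_cast hn
    linarith
  induction R with
  | zero =>
    simpa using (by exact_mod_cast NN_pos (n := n) (H := H) 0 : (1 : ℝ) ≤ (NN n H 0 : ℝ))
  | succ R ih =>
    have hNpos : (0 : ℝ) ≤ (NN n H (R + 1) : ℝ) := Nat.cast_nonneg _
    have hkey : (2 * n - 1 : ℝ) * NN n H R ≤ γ * NN n H (R + 1) := by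
      calc (2 * n - 1 : ℝ) * NN n H R
          ≤ ((1 - isoConst n H) * (2 * n) - 1) * NN n H (R + 1) := real_step hn R
        _ ≤ γ * NN n H (R + 1) :=
            mul_le_mul_of_nonneg_right (le_max_left _ _) hNpos
    calc ((2 * n - 1 : ℝ) / γ) ^ (R + 1)
        = ((2 * n - 1 : ℝ) / γ) * ((2 * n - 1 : ℝ) / γ) ^ R := by ring
      _ ≤ ((2 * n - 1 : ℝ) / γ) * NN n H R := by
          exact mul_le_mul_of_nonneg_left ih hq0
      _ ≤ (NN n H (R + 1) : ℝ) := by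
          rw [div_mul_eq_mul_div, div_le_iff₀ hγ0]
          calc (2 * n - 1 : ℝ) * NN n H R ≤ γ * NN n H (R + 1) := hkey
            _ = (NN n H (R + 1) : ℝ) * γ := by ring

end RealStep

section Growth

variable {n : ℕ} {H : Subgroup (F n)}

lemma NN_le_ball (R : ℕ) : NN n H R ≤ Nat.card {g : F n // FreeGroup.norm g ≤ R} := by
  haveI : Finite {g : F n // FreeGroup.norm g ≤ R} := (freeBall_finite (n := n) R).to_subtype
  rw [NN]
  apply Nat.card_le_card_of_injective (fun x => (⟨(exists_min_rep x.1).choose, by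
    have h := (exists_min_rep x.1).choose_spec
    rw [h.2]; exact x.2⟩ : {g : F n // FreeGroup.norm g ≤ R}))
  intro x y hxy
  have hx := (exists_min_rep x.1).choose_spec.1
  have hy := (exists_min_rep y.1).choose_spec.1
  have heq : (exists_min_rep x.1).choose = (exists_min_rep y.1).choose :=
    congrArg Subtype.val hxy
  apply Subtype.ext
  rw [← hx, ← hy, heq]

lemma NN_le_poly (hn : 2 ≤ n) (R : ℕ) :
    NN n H R ≤ (R + 1) * (2 * n * (2 * n - 1) ^ R) := by
  haveI : Nonempty (Fin n) := ⟨⟨0, by omega⟩⟩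
  have h := ball_card_bound (α := Fin n) R
  rw [Fintype.card_prod, Fintype.card_fin, Fintype.card_bool] at h
  calc NN n H R ≤ Nat.card {g : F n // FreeGroup.norm g ≤ R} := NN_le_ball R
    _ ≤ (R + 1) * (n * 2 * (n * 2 - 1) ^ R) := h
    _ = (R + 1) * (2 * n * (2 * n - 1) ^ R) := by rw [mul_comm n 2]

lemma a_le_g (hn : 2 ≤ n) (R : ℕ) :
    (NN n H R : ℝ) ^ (1 / (R : ℝ)) ≤
      ((R + 1 : ℝ) * (2 * n) * (2 * (n : ℝ) - 1) ^ (R : ℕ)) ^ (1 / (R : ℝ)) := by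
  have h2n : (2 : ℝ) ≤ (n : ℝ) := by exact_mod_cast hn
  apply Real.rpow_le_rpow (Nat.cast_nonneg _) _ (by positivity)
  have h := NN_le_poly (H := H) hn R
  have hcast := (Nat.cast_le (α := ℝ)).mpr h
  push_cast [Nat.cast_sub (by omega : 1 ≤ 2 * n)] at hcast
  calc (NN n H R : ℝ) ≤ ((R : ℝ) + 1) * (2 * n * (2 * (n : ℝ) - 1) ^ R) := hcast
    _ = (R + 1 : ℝ) * (2 * n) * (2 * (n : ℝ) - 1) ^ (R : ℕ) := by ring

lemma tendsto_g (hn : 2 ≤ n) :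
    Tendsto (fun R : ℕ => ((R + 1 : ℝ) * (2 * n) * (2 * (n : ℝ) - 1) ^ (R : ℕ)) ^ (1 / (R : ℝ)))
      atTop (nhds (2 * (n : ℝ) - 1)) := by
  have h2n : (2 : ℝ) ≤ (n : ℝ) := by exact_mod_cast hn
  exact tendsto_upper (2 * n) (2 * (n : ℝ) - 1) (by linarith) (by linarith)

lemma bounded_a (hn : 2 ≤ n) :
    IsBoundedUnder (· ≤ ·) atTop (fun R : ℕ => (NN n H R : ℝ) ^ (1 / (R : ℝ))) :=
  (tendsto_g hn).isBoundedUnder_le.mono_le (Eventually.of_forall (a_le_g hn))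

lemma graphGrowth_le (hn : 2 ≤ n) : graphGrowth n H ≤ 2 * (n : ℝ) - 1 := by
  have hcob : IsCoboundedUnder (· ≤ ·) atTop (fun R : ℕ => (NN n H R : ℝ) ^ (1 / (R : ℝ))) :=
    isCoboundedUnder_le_of_le atTop (x := 0) (fun R => by positivity)
  have : graphGrowth n H = limsup (fun R : ℕ => (NN n H R : ℝ) ^ (1 / (R : ℝ))) atTop := rfl
  rw [this]
  calc limsup (fun R : ℕ => (NN n H R : ℝ) ^ (1 / (R : ℝ))) atTop
      ≤ limsup (fun R : ℕ =>
          ((R + 1 : ℝ) * (2 * n) * (2 * (n : ℝ) - 1) ^ (R : ℕ)) ^ (1 / (R : ℝ))) atTop :=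
        limsup_le_limsup (Eventually.of_forall (a_le_g hn)) hcob
          (tendsto_g hn).isBoundedUnder_le
    _ = 2 * (n : ℝ) - 1 := (tendsto_g hn).limsup_eq

lemma graphGrowth_ge (hn : 2 ≤ n) :
    (2 * (n : ℝ) - 1) / max ((1 - isoConst n H) * (2 * n) - 1) 1 ≤ graphGrowth n H := by
  set γ : ℝ := max ((1 - isoConst n H) * (2 * n) - 1) 1 with hγ
  set q : ℝ := (2 * (n : ℝ) - 1) / γ with hqdef
  have hγ1 : (1 : ℝ) ≤ γ := le_max_right _ _
  have hγ0 : (0 : ℝ) < γ := lt_of_lt_of_le one_pos hγ1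
  have h2n : (2 : ℝ) ≤ (n : ℝ) := by exact_mod_cast hn
  have hq0 : (0 : ℝ) ≤ q := div_nonneg (by linarith) hγ0.le
  have : graphGrowth n H = limsup (fun R : ℕ => (NN n H R : ℝ) ^ (1 / (R : ℝ))) atTop := rfl
  rw [this]
  apply le_limsup_of_frequently_le _ (bounded_a hn)
  apply ((eventually_ge_atTop 1).mono _).frequently
  intro R hR
  have hRne : (R : ℝ) ≠ 0 := by
    simp only [ne_eq, Nat.cast_eq_zero]; omega
  have h1 : q ^ R ≤ (NN n H R : ℝ) := NN_lower hn R
  have h2 : (q ^ R) ^ (1 / (R : ℝ)) ≤ (NN n H R : ℝ) ^ (1 / (R : ℝ)) :=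
    Real.rpow_le_rpow (by positivity) h1 (by positivity)
  calc q = q ^ ((R : ℝ) * (1 / (R : ℝ))) := by
        rw [mul_one_div_cancel hRne, Real.rpow_one]
    _ = (q ^ R) ^ (1 / (R : ℝ)) := by
        rw [Real.rpow_mul hq0, Real.rpow_natCast]
    _ ≤ (NN n H R : ℝ) ^ (1 / (R : ℝ)) := h2

end Growth

/-- If `(H_k)` is a sequence of non-trivial subgroups of `F_n`
(`n ≥ 2`) with `i(Γ_{H_k}) → (n−1)/n = i(T_n)`, then
`growth(Γ_{H_k}) → 2n−1 = growth(T_n)`. -/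
theorem stmt12 (n : ℕ) (hn : 2 ≤ n) (H : ℕ → Subgroup (F n))
    (hnontriv : ∀ k, H k ≠ ⊥)
    (hiso : Tendsto (fun k => isoConst n (H k)) atTop (nhds ((n - 1) / n))) :
    Tendsto (fun k => graphGrowth n (H k)) atTop (nhds (2 * n - 1)) := by
  have hn0 : (n : ℝ) ≠ 0 := by
    have : (2 : ℝ) ≤ (n : ℝ) := by exact_mod_cast hn
    linarith
  have hβ : Tendsto (fun k => (1 - isoConst n (H k)) * (2 * (n : ℝ)) - 1) atTop (nhds 1) := by
    have h1 : Tendsto (fun k => (1 - isoConst n (H k)) * (2 * (n : ℝ)) - 1) atTop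
        (nhds ((1 - ((n : ℝ) - 1) / n) * (2 * (n : ℝ)) - 1)) :=
      ((tendsto_const_nhds.sub hiso).mul_const _).sub_const 1
    have h2 : (1 - ((n : ℝ) - 1) / n) * (2 * (n : ℝ)) - 1 = 1 := by
      field_simp
      ring
    rwa [h2] at h1
  have hγ : Tendsto (fun k => max ((1 - isoConst n (H k)) * (2 * (n : ℝ)) - 1) 1) atTop
      (nhds 1) := by
    have := hβ.max (tendsto_const_nhds (x := (1 : ℝ)))
    simpa using this
  have hlow : Tendsto (fun k => (2 * (n : ℝ) - 1) /
      max ((1 - isoConst n (H k)) * (2 * (n : ℝ)) - 1) 1) atTop (nhds (2 * (n : ℝ) - 1)) := by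
    have := (tendsto_const_nhds (x := 2 * (n : ℝ) - 1)).div hγ one_ne_zero
    rw [div_one] at this
    exact this
  exact tendsto_of_tendsto_of_tendsto_of_le_of_le hlow tendsto_const_nhds
    (fun k => graphGrowth_ge hn) (fun k => graphGrowth_le hn)

end JM
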